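/- Let B be a ball of radius r in R^n, 1 ≤ p < ∞, δ ∈ (0,1), and u ∈ L^p(B). Then (1/|B|) ∫_B |u(y) − u_B| dy ≤ c |B|^{δ/n − 1} ∫_B (∫_B |u(y)−u(z)|^p / |y−z|^{n+δp} dz)^{1/p} dy, where c depends only on n, p, δ. -/

import Mathlib

open MeasureTheory Metric
open scoped ENNReal

private lemma lintegral_le_Lp_mul_measure {α : Type*} {m : MeasurableSpace α} (μ : Measure α)
    {f : α → ℝ≥0∞} (hf : AEMeasurable f μ) {p : ℝ} (hp : 1 ≤ p) :
    ∫⁻ x, f x ∂μ ≤ (∫⁻ x, f x ^ p ∂μ) ^ (1/p) * μ Set.univ ^ (1 - 1/p) := by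
  rcases eq_or_lt_of_le hp with h1 | h1
  · simp [← h1]
  · have hpq : p.HolderConjugate (p/(p-1)) := Real.HolderConjugate.conjExponent h1
    have H := ENNReal.lintegral_mul_le_Lp_mul_Lq μ hpq hf
      (aemeasurable_const (b := (1:ℝ≥0∞)))
    have h1q : 1/(p/(p-1)) = 1 - 1/p := by field_simp
    simpa [h1q, ENNReal.one_rpow, lintegral_const] using H

theorem ball_mean_oscillation_bound (n : ℕ) (hn : 0 < n) (p δ : ℝ) (hp : 1 ≤ p)
    (hδ : δ ∈ Set.Ioo (0:ℝ) 1) :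
    ∃ c : ℝ, 0 < c ∧
      ∀ (x₀ : EuclideanSpace ℝ (Fin n)) (r : ℝ), 0 < r →
      ∀ u : EuclideanSpace ℝ (Fin n) → ℝ,
        MemLp u (ENNReal.ofReal p) (volume.restrict (ball x₀ r)) →
        ENNReal.ofReal ((volume (ball x₀ r)).toReal⁻¹
            * ∫ y in ball x₀ r, |u y - ⨍ z in ball x₀ r, u z|)
          ≤ ENNReal.ofReal (c * (volume (ball x₀ r)).toReal ^ (δ / n - 1))
            * ∫⁻ y in ball x₀ r,
                (∫⁻ z in ball x₀ r,
                  ENNReal.ofReal (|u y - u z| ^ p / dist y z ^ ((n : ℝ) + δ * p))) ^ (1 / p) := by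
  obtain ⟨hδ0, hδ1⟩ := hδ
  have hp0 : (0:ℝ) < p := lt_of_lt_of_le one_pos hp
  have hn' : (0:ℝ) < n := Nat.cast_pos.mpr hn
  haveI : Nontrivial (EuclideanSpace ℝ (Fin n)) := by
    exact Module.nontrivial_of_finrank_pos (R := ℝ)
      (by rw [finrank_euclideanSpace_fin]; exact hn)
  set α : ℝ := ((n:ℝ) + δ * p) / p with hαdef
  have hα0 : 0 < α := by positivity
  have hnne : (n:ℝ) ≠ 0 := hn'.ne'
  set W : ℝ≥0∞ := volume (ball (0 : EuclideanSpace ℝ (Fin n)) 1) with hWdef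
  have hW0 : W ≠ 0 := (measure_ball_pos _ _ one_pos).ne'
  have hWtop : W ≠ ⊤ := measure_ball_lt_top.ne
  set Wt : ℝ := W.toReal with hWtdef
  have hWt : 0 < Wt := ENNReal.toReal_pos hW0 hWtop
  refine ⟨2^α * Wt^(-(α/(n:ℝ))), by positivity, ?_⟩
  intro x₀ r hr u hu
  set B := ball x₀ r with hBdef
  set μ := volume.restrict B with hμdef
  have hVB : volume B = ENNReal.ofReal (r ^ n) * W := by
    rw [hBdef, Measure.addHaar_ball volume x₀ hr.le, finrank_euclideanSpace_fin, hWdef]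
  set V : ℝ≥0∞ := volume B with hVdef
  have hV0 : V ≠ 0 := (measure_ball_pos _ _ hr).ne'
  have hVtop : V ≠ ⊤ := measure_ball_lt_top.ne
  set Vt : ℝ := V.toReal with hVtdef
  have hVt : 0 < Vt := ENNReal.toReal_pos hV0 hVtop
  have hVtval : Vt = r ^ n * Wt := by
    rw [hVtdef, hVB, ENNReal.toReal_mul, ENNReal.toReal_ofReal (by positivity)]
  haveI : IsFiniteMeasure μ := ⟨by
    rw [hμdef, Measure.restrict_apply_univ]; exact measure_ball_lt_top⟩
  have hμuniv : μ Set.univ = V := by rw [hμdef, Measure.restrict_apply_univ, hVdef]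
  have hui : Integrable u μ := hu.integrable (ENNReal.one_le_ofReal.mpr hp)
  set m : ℝ := ⨍ z in B, u z with hmdef
  have hm : m = Vt⁻¹ * ∫ z, u z ∂μ := by
    rw [hmdef, setAverage_eq, smul_eq_mul, hVtdef, hVdef, measureReal_def]
  -- pointwise bound for |u y - m|
  have key1 : ∀ y, |u y - m| ≤ Vt⁻¹ * ∫ z, |u y - u z| ∂μ := by
    intro y
    have h1 : u y - m = Vt⁻¹ * ∫ z, (u y - u z) ∂μ := by
      rw [integral_sub (integrable_const _) hui, integral_const, measureReal_def, hμuniv, smul_eq_mul, hm,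
        ← hVtdef]
      field_simp
    rw [h1, abs_mul, abs_of_nonneg (inv_nonneg.mpr hVt.le)]
    gcongr
    calc |∫ z, (u y - u z) ∂μ| ≤ ∫ z, |u y - u z| ∂μ := by
          simpa [Real.norm_eq_abs] using
            norm_integral_le_integral_norm (μ := μ) (f := fun z => u y - u z)
      _ ≤ ∫ z, |u y - u z| ∂μ := le_refl _
  -- the inner function
  set F : EuclideanSpace ℝ (Fin n) → ℝ≥0∞ := fun y =>
    ∫⁻ z, ENNReal.ofReal (|u y - u z| ^ p / dist y z ^ ((n : ℝ) + δ * p)) ∂μ with hFdef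
  -- step B+C : per y ∈ B
  have key2 : ∀ y ∈ B, ∫⁻ z, ENNReal.ofReal |u y - u z| ∂μ
      ≤ ENNReal.ofReal ((2*r)^α) * ((F y) ^ (1/p) * V ^ (1 - 1/p)) := by
    intro y hy
    set g : EuclideanSpace ℝ (Fin n) → ℝ≥0∞ :=
      fun z => ENNReal.ofReal (|u y - u z| / dist y z ^ α) with hgdef
    have hgm : AEMeasurable g μ := by
      apply ENNReal.measurable_ofReal.comp_aemeasurable
      apply AEMeasurable.div
      · exact continuous_abs.measurable.comp_aemeasurable
          (aemeasurable_const.sub hu.1.aemeasurable)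
      · exact ((Real.continuous_rpow_const hα0.le).comp
          (continuous_const.dist continuous_id)).measurable.aemeasurable
    have hstep1 : ∫⁻ z, ENNReal.ofReal |u y - u z| ∂μ
        ≤ ENNReal.ofReal ((2*r)^α) * ∫⁻ z, g z ∂μ := by
      rw [← lintegral_const_mul' _ _ ENNReal.ofReal_ne_top]
      apply lintegral_mono_ae
      have hae : ∀ᵐ z ∂μ, z ∈ B := ae_restrict_mem measurableSet_ball
      have hae2 : ∀ᵐ z ∂μ, z ≠ y := by
        have h0 : μ {y} = 0 := measure_singleton y
        rw [ae_iff]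
        convert h0 using 2
        ext z; simp
      filter_upwards [hae, hae2] with z hzB hzy
      have hd0 : 0 < dist y z := dist_pos.mpr (Ne.symm hzy)
      have hd2r : dist y z ≤ 2 * r := by
        have h1 : dist y x₀ < r := mem_ball.mp hy
        have h2 : dist z x₀ < r := mem_ball.mp hzB
        calc dist y z ≤ dist y x₀ + dist x₀ z := dist_triangle _ _ _
          _ = dist y x₀ + dist z x₀ := by rw [dist_comm x₀ z]
          _ ≤ 2 * r := by linarith
      have hle : dist y z ^ α ≤ (2*r)^α := Real.rpow_le_rpow dist_nonneg hd2r hα0.le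
      have : |u y - u z| ≤ (2*r)^α * (|u y - u z| / dist y z ^ α) := by
        rw [mul_comm, div_mul_eq_mul_div, le_div_iff₀ (Real.rpow_pos_of_pos hd0 α)]
        exact mul_le_mul_of_nonneg_left hle (abs_nonneg _)
      calc ENNReal.ofReal |u y - u z|
          ≤ ENNReal.ofReal ((2*r)^α * (|u y - u z| / dist y z ^ α)) :=
            ENNReal.ofReal_le_ofReal this
        _ = ENNReal.ofReal ((2*r)^α) * g z := by
            rw [ENNReal.ofReal_mul (by positivity), hgdef]
    have hstep2 : ∫⁻ z, g z ∂μ ≤ (F y) ^ (1/p) * V ^ (1 - 1/p) := by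
      have H := lintegral_le_Lp_mul_measure μ hgm hp
      rw [hμuniv] at H
      have hgp : ∀ z, g z ^ p
          = ENNReal.ofReal (|u y - u z| ^ p / dist y z ^ ((n : ℝ) + δ * p)) := by
        intro z
        show ENNReal.ofReal (|u y - u z| / dist y z ^ α) ^ p = _
        rw [ENNReal.ofReal_rpow_of_nonneg (by positivity) hp0.le]
        congr 1
        rw [Real.div_rpow (abs_nonneg _) (Real.rpow_nonneg dist_nonneg _),
          ← Real.rpow_mul dist_nonneg]
        congr 2
        rw [hαdef]; field_simp
      have : (∫⁻ z, g z ^ p ∂μ) = F y := by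
        rw [hFdef]; exact lintegral_congr hgp
      rwa [this] at H
    calc ∫⁻ z, ENNReal.ofReal |u y - u z| ∂μ
        ≤ ENNReal.ofReal ((2*r)^α) * ∫⁻ z, g z ∂μ := hstep1
      _ ≤ ENNReal.ofReal ((2*r)^α) * ((F y) ^ (1/p) * V ^ (1 - 1/p)) := by
          exact mul_le_mul_right hstep2 _
  -- rewrite LHS as lintegral
  have hient : Integrable (fun y => |u y - m|) μ := (hui.sub (integrable_const m)).abs
  have hLHS : ENNReal.ofReal (Vt⁻¹ * ∫ y, |u y - m| ∂μ)
      = V⁻¹ * ∫⁻ y, ENNReal.ofReal |u y - m| ∂μ := by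
    rw [ENNReal.ofReal_mul (inv_nonneg.mpr hVt.le),
      ofReal_integral_eq_lintegral_ofReal hient
        (Filter.Eventually.of_forall fun y => abs_nonneg _),
      ENNReal.ofReal_inv_of_pos hVt, ENNReal.ofReal_toReal hVtop]
  refine le_trans (le_of_eq hLHS) ?_
  have hAne : ENNReal.ofReal ((2*r)^α) ≠ ⊤ := ENNReal.ofReal_ne_top
  have hVqne : V ^ (1 - 1/p) ≠ ⊤ :=
    ENNReal.rpow_ne_top_of_nonneg (by
      have : 1/p ≤ 1 := by
        rw [div_le_one hp0]; exact hp
      linarith) hVtop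
  have hVine : V⁻¹ ≠ ⊤ := ENNReal.inv_ne_top.mpr hV0
  calc V⁻¹ * ∫⁻ y, ENNReal.ofReal |u y - m| ∂μ
      ≤ V⁻¹ * ∫⁻ y, (V⁻¹ * (ENNReal.ofReal ((2*r)^α) * V ^ (1 - 1/p)))
          * (F y) ^ (1/p) ∂μ := by
        apply mul_le_mul_right
        apply lintegral_mono_ae
        filter_upwards [ae_restrict_mem measurableSet_ball] with y hy
        calc ENNReal.ofReal |u y - m|
            ≤ ENNReal.ofReal (Vt⁻¹ * ∫ z, |u y - u z| ∂μ) :=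
              ENNReal.ofReal_le_ofReal (key1 y)
          _ = V⁻¹ * ∫⁻ z, ENNReal.ofReal |u y - u z| ∂μ := by
              rw [ENNReal.ofReal_mul (inv_nonneg.mpr hVt.le),
                ofReal_integral_eq_lintegral_ofReal
                  (by simpa using ((integrable_const (u y)).sub hui).abs)
                  (Filter.Eventually.of_forall fun z => abs_nonneg _),
                ENNReal.ofReal_inv_of_pos hVt, ENNReal.ofReal_toReal hVtop]
          _ ≤ V⁻¹ * (ENNReal.ofReal ((2*r)^α) * ((F y) ^ (1/p) * V ^ (1 - 1/p))) :=
              mul_le_mul_right (key2 y hy) _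
          _ = (V⁻¹ * (ENNReal.ofReal ((2*r)^α) * V ^ (1 - 1/p))) * (F y) ^ (1/p) := by
              ring
    _ = (V⁻¹ * (V⁻¹ * (ENNReal.ofReal ((2*r)^α) * V ^ (1 - 1/p))))
          * ∫⁻ y, (F y) ^ (1/p) ∂μ := by
        rw [lintegral_const_mul' _ _ (by
          exact ENNReal.mul_ne_top hVine (ENNReal.mul_ne_top hAne hVqne))]
        ring
    _ ≤ ENNReal.ofReal ((2^α * Wt^(-(α/(n:ℝ)))) * Vt ^ (δ/(n:ℝ) - 1))
          * ∫⁻ y, (F y) ^ (1/p) ∂μ := by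
        apply mul_le_mul_left
        have hVof : V = ENNReal.ofReal Vt := (ENNReal.ofReal_toReal hVtop).symm
        have e1 : V⁻¹ = ENNReal.ofReal (Vt⁻¹) := by
          rw [hVof, ← ENNReal.ofReal_inv_of_pos hVt]
        have e2 : V ^ (1 - 1/p) = ENNReal.ofReal (Vt ^ (1 - 1/p)) := by
          rw [hVof, ENNReal.ofReal_rpow_of_pos hVt]
        rw [e1, e2, ← ENNReal.ofReal_mul (by positivity), ← ENNReal.ofReal_mul (by positivity),
          ← ENNReal.ofReal_mul (by positivity)]
        apply ENNReal.ofReal_le_ofReal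
        apply le_of_eq
        have h2 : (2*r)^α = 2^α * r^α := Real.mul_rpow (by norm_num) hr.le
        have hsplit : ∀ x : ℝ, Vt ^ x = r ^ ((n:ℝ) * x) * Wt ^ x := by
          intro x
          rw [hVtval, Real.mul_rpow (by positivity) hWt.le, ← Real.rpow_natCast r n,
            ← Real.rpow_mul hr.le]
        have earith : (-1:ℝ) + -1 + (1 - 1/p) = -(α/(n:ℝ)) + (δ/(n:ℝ) - 1) := by
          rw [hαdef]; field_simp; ring
        have hrn : r ^ ((n:ℝ) * (-(α/(n:ℝ)))) = r ^ (-α) := by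
          congr 1; field_simp
        have hrr : r ^ α * r ^ (-α) = 1 := by
          rw [← Real.rpow_add hr]; simp
        calc Vt⁻¹ * (Vt⁻¹ * ((2*r)^α * Vt ^ (1 - 1/p)))
            = 2^α * r^α * (Vt ^ (-1:ℝ) * Vt ^ (-1:ℝ) * Vt ^ (1 - 1/p)) := by
              rw [h2, Real.rpow_neg_one Vt]; ring
          _ = 2^α * r^α * Vt ^ ((-1:ℝ) + -1 + (1 - 1/p)) := by
              rw [← Real.rpow_add hVt, ← Real.rpow_add hVt]
          _ = 2^α * r^α * (Vt ^ (-(α/(n:ℝ))) * Vt ^ (δ/(n:ℝ) - 1)) := by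
              rw [← Real.rpow_add hVt, earith]
          _ = 2^α * Wt^(-(α/(n:ℝ))) * Vt ^ (δ/(n:ℝ) - 1) := by
              rw [hsplit (-(α/(n:ℝ))), hrn,
                show (2:ℝ)^α * r^α * (r ^ (-α) * Wt ^ (-(α/(n:ℝ))) * Vt ^ (δ/(n:ℝ) - 1))
                  = (r ^ α * r ^ (-α)) * (2^α * Wt ^ (-(α/(n:ℝ))) * Vt ^ (δ/(n:ℝ) - 1)) from by
                  ring, hrr, one_mul]
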